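/- Let 0 ≤ α_l < α_h ≤ 1, δ_l = α_l/(α_l+α_h), and δ_h = (1-α_l)/(2-α_l-α_h). Then for every δ with 0 ≤ δ < δ_l, the set {r : δ·Q_h(r) > (1-δ)·Q_l(r)} is empty; and for every δ with δ_h < δ ≤ 1, the set {r : δ·Q_h(r) < (1-δ)·Q_l(r)} is empty. (That is, pseudoprevalence values outside [δ_l, δ_h] produce degenerate classifiers.) -/
import Mathlib


open Set

/-- For `0 ≤ α_l < α_h ≤ 1`, `δ_l = α_l/(α_l+α_h)`, and
`δ_h = (1-α_l)/(2-α_l-α_h)`: for every `δ ∈ [0, δ_l)` the set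
`{r : δ·Q_h(r) > (1-δ)·Q_l(r)}` is empty, and for every `δ ∈ (δ_h, 1]` the set
`{r : δ·Q_h(r) < (1-δ)·Q_l(r)}` is empty. -/
theorem stmt_10 {m : ℕ} (N P : (Fin m → ℝ) → ℝ)
    (hNmeas : Measurable N) (hPmeas : Measurable P)
    (hNnonneg : ∀ r, 0 ≤ N r) (hPnonneg : ∀ r, 0 ≤ P r)
    (αl αh : ℝ) (hαl : 0 ≤ αl) (hlh : αl < αh) (hαh : αh ≤ 1)
    (Ql Qh : (Fin m → ℝ) → ℝ)
    (hQl : ∀ r, Ql r = αl * P r + (1 - αl) * N r)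
    (hQh : ∀ r, Qh r = αh * P r + (1 - αh) * N r) :
    (∀ δ : ℝ, 0 ≤ δ → δ < αl / (αl + αh) →
      {r : Fin m → ℝ | δ * Qh r > (1 - δ) * Ql r} = ∅)
    ∧ (∀ δ : ℝ, (1 - αl) / (2 - αl - αh) < δ → δ ≤ 1 →
      {r : Fin m → ℝ | δ * Qh r < (1 - δ) * Ql r} = ∅) := by
  have hsum : 0 < αl + αh := by linarith
  have hsum2 : 0 < 2 - αl - αh := by linarith
  constructor
  · intro δ hδ0 hδl
    have h1 : δ * (αl + αh) < αl := (lt_div_iff₀ hsum).mp hδl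
    have hδhalf : δ < 1 / 2 := by nlinarith
    have hc1 : 0 ≤ αl - δ * (αl + αh) := by linarith
    have hc2 : 0 ≤ 1 - αl - δ * (2 - αl - αh) := by nlinarith
    ext r
    simp only [mem_setOf_eq, mem_empty_iff_false, iff_false, not_lt]
    rw [hQl r, hQh r]
    nlinarith [mul_nonneg hc1 (hPnonneg r), mul_nonneg hc2 (hNnonneg r)]
  · intro δ hδh hδ1
    have h1 : 1 - αl < δ * (2 - αl - αh) := (div_lt_iff₀ hsum2).mp hδh
    have hδhalf : 1 / 2 < δ := by nlinarith
    have hc1 : 0 ≤ δ * αh - (1 - δ) * αl := by nlinarith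
    have hc2 : 0 ≤ δ * (1 - αh) - (1 - δ) * (1 - αl) := by nlinarith
    ext r
    simp only [mem_setOf_eq, mem_empty_iff_false, iff_false, not_lt]
    rw [hQl r, hQh r]
    nlinarith [mul_nonneg hc1 (hPnonneg r), mul_nonneg hc2 (hNnonneg r)]
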